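/- Let m > 0, γ̄ > 0 and γ_th > 0. Let γ be Gamma-distributed with shape m and rate m/γ̄ (Nakagami-m fading), i.e. with density x ↦ (m/γ̄)^{m} x^{m−1} e^{−m x/γ̄} / Γ(m) on (0,∞). Then the outage probability obtained from the analytically continued average channel capacity satisfies 1 − (1/π) ∫₀^∞ Im(Log(1 − x/γ_th)) · (m/γ̄)^{m} x^{m−1} e^{−m x/γ̄} / Γ(m) dx = 1 − Γ(m, m γ_th/γ̄)/Γ(m), where Log is the principal branch of the complex logarithm (imaginary part in (−π, π], equal to π on negative reals) and Γ(m, y) = ∫_y^∞ t^{m−1} e^{−t} dt is the upper incomplete Gamma function; i.e., P_out(γ̄; γ_th) = 1 − Γ(m, m γ_th/γ̄)/Γ(m). -/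
import Mathlib


open MeasureTheory Real

/-- The upper incomplete Gamma function `Γ(m, y) = ∫_y^∞ t^{m−1} e^{−t} dt`. -/
noncomputable def upperIncGamma (m y : ℝ) : ℝ :=
  ∫ t in Set.Ioi y, t ^ (m - 1) * Real.exp (-t)

/-- **Outage probability over Nakagami-m fading channels via the
analytically continued average channel capacity.**  For `m, γ̄, γ_th > 0` and
a Gamma-distributed SNR with shape `m` and rate `m/γ̄`,
`1 − (1/π) ∫₀^∞ Im(Log(1 − x/γ_th)) (m/γ̄)^m x^{m−1} e^{−mx/γ̄}/Γ(m) dx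
  = 1 − Γ(m, mγ_th/γ̄)/Γ(m)`,
where `Log` is the principal branch of the complex logarithm. -/
theorem outage_probability_nakagami
    (m γbar γth : ℝ) (hm : 0 < m) (hγ : 0 < γbar) (hth : 0 < γth) :
    1 - (1 / π) *
        ∫ x in Set.Ioi (0 : ℝ),
          (Complex.log (1 - (x : ℂ) / (γth : ℂ))).im *
            ((m / γbar) ^ m * x ^ (m - 1) * Real.exp (-(m * x / γbar)) /
              Real.Gamma m)
      = 1 - upperIncGamma m (m * γth / γbar) / Real.Gamma m := by
  set c := m / γbar with hc
  have hcpos : 0 < c := div_pos hm hγ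
  set D : ℝ → ℝ := fun x => c ^ m * x ^ (m - 1) * Real.exp (-(m * x / γbar)) with hD
  have key : ∀ x ∈ Set.Ioi (0:ℝ),
      (Complex.log (1 - (x : ℂ) / (γth : ℂ))).im * (D x / Real.Gamma m)
        = Set.indicator (Set.Ioi γth) (fun x => π * (D x / Real.Gamma m)) x := by
    intro x hx
    have hcast : (1 : ℂ) - (x : ℂ) / (γth : ℂ) = ((1 - x / γth : ℝ) : ℂ) := by
      push_cast; ring
    rw [hcast, Complex.log_im]
    rcases le_or_gt x γth with h | h
    · rw [Set.indicator_of_notMem (by simpa using h)]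
      have : (0:ℝ) ≤ 1 - x / γth := by
        rw [sub_nonneg]
        exact div_le_one_of_le₀ h hth.le
      rw [Complex.arg_ofReal_of_nonneg this, zero_mul]
    · rw [Set.indicator_of_mem (by simpa using h)]
      have : (1 - x / γth : ℝ) < 0 := by
        rw [sub_neg]
        exact (one_lt_div hth).mpr h
      rw [Complex.arg_ofReal_of_neg this]
  rw [setIntegral_congr_fun measurableSet_Ioi key, setIntegral_indicator measurableSet_Ioi,
    Set.Ioi_inter_Ioi, max_eq_right hth.le]
  have hIm : ∫ x in Set.Ioi γth, π * (D x / Real.Gamma m)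
      = π * ((∫ x in Set.Ioi γth, D x) / Real.Gamma m) := by
    rw [MeasureTheory.integral_const_mul, ← integral_div]
  have hDval : ∀ x ∈ Set.Ioi γth, D x = c * ((c * x) ^ (m - 1) * Real.exp (-(c * x))) := by
    intro x hx
    have hxpos : 0 < x := hth.trans hx
    have h1 : (c * x) ^ (m - 1) = c ^ (m - 1) * x ^ (m - 1) :=
      Real.mul_rpow hcpos.le hxpos.le
    have h2 : c ^ m = c * c ^ (m - 1) := by
      conv_lhs => rw [show m = 1 + (m - 1) by ring, Real.rpow_add hcpos, Real.rpow_one]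
    have h3 : m * x / γbar = c * x := by
      rw [hc]; ring
    show c ^ m * x ^ (m - 1) * Real.exp (-(m * x / γbar)) = _
    rw [h3, h1, h2]
    ring
  have hint : ∫ x in Set.Ioi γth, D x = upperIncGamma m (m * γth / γbar) := by
    rw [setIntegral_congr_fun measurableSet_Ioi hDval, MeasureTheory.integral_const_mul,
      integral_comp_mul_left_Ioi (fun t => t ^ (m - 1) * Real.exp (-t)) γth hcpos]
    rw [smul_eq_mul, ← mul_assoc, mul_inv_cancel₀ hcpos.ne', one_mul]
    have : c * γth = m * γth / γbar := by rw [hc]; ring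
    rw [this, upperIncGamma]
  rw [hIm, hint]
  rw [← mul_assoc, one_div, inv_mul_cancel₀ Real.pi_ne_zero, one_mul]
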